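/- arXiv:2105.07457 — 2 statements merged into one kernel-verified Lean document; each statement's English description precedes it below -/
import Mathlib

section
/- Let L be a strongly regular frame, ι an index type, (Lᵢ)_{i ∈ ι} a family of compact regular frames, and fᵢ : Lᵢ → L frame homomorphisms. Then there exist a compact regular frame M and a dense surjective frame homomorphism k : M → L such that for every i ∈ ι there is a unique frame homomorphism gᵢ : Lᵢ → M with fᵢ = k ∘ gᵢ. -/
/-- The well-inside relation of a frame: `b` is well inside `a` iff `bᶜ ⊔ a = ⊤`. -/
def WellInside {L : Type*} [Order.Frame L] (b a : L) : Prop := bᶜ ⊔ a = ⊤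

/-- A frame is regular if every element is the join of the elements well inside it. -/
def IsRegularFrame (L : Type*) [Order.Frame L] : Prop :=
  ∀ a : L, a = sSup {b | WellInside b a}

/-- A frame is compact if `⊤` is a compact element. -/
def IsCompactFrame (L : Type*) [Order.Frame L] : Prop :=
  ∀ S : Set L, ⊤ ≤ sSup S → ∃ T : Set L, T ⊆ S ∧ T.Finite ∧ ⊤ ≤ sSup T

/-- A binary relation `r` is interpolative if `r x y` implies there is `z`
with `r x z` and `r z y`. -/
def Interpolative {A : Type*} (r : A → A → Prop) : Prop :=
  ∀ x y, r x y → ∃ z, r x z ∧ r z y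

/-- The greatest interpolative relation contained in `r`: the union of all
interpolative relations contained in `r`. -/
def gis {A : Type*} (r : A → A → Prop) : A → A → Prop :=
  fun x y => ∃ s : A → A → Prop,
    (∀ a b, s a b → r a b) ∧ Interpolative s ∧ s x y

namespace SRC

variable {L : Type*} [Order.Frame L]

theorem le_of_top_le_compl_sup {z w : L} (h : ⊤ ≤ zᶜ ⊔ w) : z ≤ w := by
  rw [top_le_iff] at h
  calc z = z ⊓ (zᶜ ⊔ w) := by rw [h, inf_top_eq]
    _ = (z ⊓ zᶜ) ⊔ (z ⊓ w) := inf_sup_left z _ _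
    _ ≤ w := by rw [inf_compl_self]; exact sup_le bot_le inf_le_right

theorem wi_le {b a : L} (h : WellInside b a) : b ≤ a := le_of_top_le_compl_sup h.ge

theorem wi_mono {b' b a a' : L} (hb : b' ≤ b) (h : WellInside b a) (ha : a ≤ a') :
    WellInside b' a' :=
  top_le_iff.mp (h ▸ sup_le_sup (compl_anti hb) ha)

theorem wi_bot (a : L) : WellInside ⊥ a := by simp [WellInside]

theorem wi_top (a : L) : WellInside a ⊤ := by simp [WellInside]

theorem wi_sup {b b' a : L} (h : WellInside b a) (h' : WellInside b' a) :
    WellInside (b ⊔ b') a := by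
  unfold WellInside at *
  rw [compl_sup, sup_comm, sup_inf_left, sup_comm a, sup_comm a, h, h', inf_top_eq]

theorem wi_inf {a b c : L} (h : WellInside a b) (h' : WellInside a c) :
    WellInside a (b ⊓ c) := by
  unfold WellInside at *
  rw [sup_inf_left, h, h', inf_top_eq]

theorem wi_sSup_finite {V : Set L} (hV : V.Finite) {x : L} :
    (∀ v ∈ V, WellInside v x) → WellInside (sSup V) x := by
  refine Set.Finite.induction_on V hV (fun _ => by simpa using wi_bot x) ?_
  intro a s _ _ ih h
  rw [sSup_insert]
  exact wi_sup (h a (Set.mem_insert _ _)) (ih fun v hv => h v (Set.mem_insert_of_mem _ hv))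

theorem gis_interpolative {A : Type*} (r : A → A → Prop) : Interpolative (gis r) := by
  rintro x y ⟨s, hsub, hint, hxy⟩
  obtain ⟨z, h1, h2⟩ := hint x y hxy
  exact ⟨z, ⟨s, hsub, hint, h1⟩, ⟨s, hsub, hint, h2⟩⟩

theorem gis_sub {A : Type*} {r : A → A → Prop} {x y : A} (h : gis r x y) : r x y := by
  obtain ⟨s, hsub, _, hxy⟩ := h
  exact hsub _ _ hxy

theorem G_le {b a : L} (h : gis WellInside b a) : b ≤ a := wi_le (gis_sub h)

theorem G_mono {b' b a a' : L} (hb : b' ≤ b) (h : gis WellInside b a) (ha : a ≤ a') :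
    gis WellInside b' a' := by
  refine ⟨fun x y => ∃ x' y', x ≤ x' ∧ gis WellInside x' y' ∧ y' ≤ y, ?_, ?_, b, a, hb, h, ha⟩
  · rintro u v ⟨x', y', hx, hG, hy⟩
    exact wi_mono hx (gis_sub hG) hy
  · rintro u v ⟨x', y', hx, hG, hy⟩
    obtain ⟨z, h1, h2⟩ := gis_interpolative _ _ _ hG
    exact ⟨z, ⟨x', z, hx, h1, le_rfl⟩, ⟨z, y', le_rfl, h2, hy⟩⟩

theorem G_bot (a : L) : gis WellInside ⊥ a := by
  refine ⟨fun x _ => x = ⊥, ?_, ?_, rfl⟩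
  · rintro u v rfl; exact wi_bot v
  · rintro u v rfl; exact ⟨⊥, rfl, rfl⟩

theorem G_top (a : L) : gis WellInside a ⊤ := by
  refine ⟨fun _ y => y = ⊤, ?_, ?_, rfl⟩
  · rintro u v rfl; exact wi_top u
  · rintro u v rfl; exact ⟨⊤, rfl, rfl⟩

theorem G_sup {b b' a : L} (h : gis WellInside b a) (h' : gis WellInside b' a) :
    gis WellInside (b ⊔ b') a := by
  refine ⟨fun x y => ∃ x₁ x₂, x = x₁ ⊔ x₂ ∧ gis WellInside x₁ y ∧ gis WellInside x₂ y,
    ?_, ?_, b, b', rfl, h, h'⟩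
  · rintro u v ⟨x₁, x₂, rfl, h1, h2⟩
    exact wi_sup (gis_sub h1) (gis_sub h2)
  · rintro u v ⟨x₁, x₂, rfl, h1, h2⟩
    obtain ⟨z₁, h11, h12⟩ := gis_interpolative _ _ _ h1
    obtain ⟨z₂, h21, h22⟩ := gis_interpolative _ _ _ h2
    exact ⟨z₁ ⊔ z₂, ⟨x₁, x₂, rfl, G_mono le_rfl h11 le_sup_left, G_mono le_rfl h21 le_sup_right⟩,
      ⟨z₁, z₂, rfl, h12, h22⟩⟩

theorem G_inf {a b c : L} (h : gis WellInside a b) (h' : gis WellInside a c) :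
    gis WellInside a (b ⊓ c) := by
  refine ⟨fun x y => ∃ y₁ y₂, y = y₁ ⊓ y₂ ∧ gis WellInside x y₁ ∧ gis WellInside x y₂,
    ?_, ?_, b, c, rfl, h, h'⟩
  · rintro u v ⟨y₁, y₂, rfl, h1, h2⟩
    exact wi_inf (gis_sub h1) (gis_sub h2)
  · rintro u v ⟨y₁, y₂, rfl, h1, h2⟩
    obtain ⟨z₁, h11, h12⟩ := gis_interpolative _ _ _ h1
    obtain ⟨z₂, h21, h22⟩ := gis_interpolative _ _ _ h2
    exact ⟨z₁ ⊓ z₂, ⟨z₁, z₂, rfl, h11, h21⟩,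
      ⟨y₁, y₂, rfl, G_mono inf_le_left h12 le_rfl, G_mono inf_le_right h22 le_rfl⟩⟩

theorem G_compl {b a : L} (h : gis WellInside b a) : gis WellInside aᶜ bᶜ := by
  refine ⟨fun x y => ∃ p q, gis WellInside q p ∧ x ≤ pᶜ ∧ qᶜ ≤ y, ?_, ?_, a, b, h, le_rfl, le_rfl⟩
  · rintro u v ⟨p, q, hqp, hx, hy⟩
    refine top_le_iff.mp ?_
    calc (⊤ : L) = qᶜ ⊔ p := (gis_sub hqp).symm
      _ ≤ v ⊔ uᶜ := sup_le_sup hy (le_compl_compl.trans (compl_anti hx))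
      _ = uᶜ ⊔ v := sup_comm _ _
  · rintro u v ⟨p, q, hqp, hx, hy⟩
    obtain ⟨m, h1, h2⟩ := gis_interpolative _ _ _ hqp
    exact ⟨mᶜ, ⟨p, m, h2, hx, le_rfl⟩, ⟨m, q, h1, le_rfl, hy⟩⟩

end SRC

namespace SRC

variable {L : Type u} [Order.Frame L]

/-- Rounded ideals with respect to the greatest interpolative subrelation of `WellInside`. -/
def IsRId (I : Set L) : Prop :=
  ⊥ ∈ I ∧ (∀ ⦃a b : L⦄, a ≤ b → b ∈ I → a ∈ I) ∧ (∀ ⦃a b : L⦄, a ∈ I → b ∈ I → a ⊔ b ∈ I) ∧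
    ∀ a ∈ I, ∃ b ∈ I, gis WellInside a b

/-- The type of rounded ideals of `L`. -/
def RIdl (L : Type u) [Order.Frame L] : Type u := {I : Set L // IsRId I}

instance : PartialOrder (RIdl L) := Subtype.partialOrder _

theorem RIdl.le_def {I J : RIdl L} : I ≤ J ↔ I.1 ⊆ J.1 := Iff.rfl

theorem RIdl.bot_mem (I : RIdl L) : ⊥ ∈ I.1 := I.2.1

theorem RIdl.down {I : RIdl L} {a b : L} (h : a ≤ b) (hb : b ∈ I.1) : a ∈ I.1 := I.2.2.1 h hb

theorem RIdl.sup_mem {I : RIdl L} {a b : L} (ha : a ∈ I.1) (hb : b ∈ I.1) : a ⊔ b ∈ I.1 :=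
  I.2.2.2.1 ha hb

theorem RIdl.rounded {I : RIdl L} {a : L} (ha : a ∈ I.1) : ∃ b ∈ I.1, gis WellInside a b :=
  I.2.2.2.2 a ha

theorem RIdl.finsetSup_mem (I : RIdl L) (T : Finset L) (hT : ∀ t ∈ T, t ∈ I.1) :
    T.sup id ∈ I.1 := by
  classical
  induction T using Finset.induction_on with
  | empty => simpa using I.bot_mem
  | @insert t T _ ih =>
    rw [Finset.sup_insert]
    exact I.sup_mem (hT t (Finset.mem_insert_self _ _))
      (ih fun u hu => hT u (Finset.mem_insert_of_mem hu))

theorem RIdl.sSup_mem_of_finite (I : RIdl L) {V : Set L} (hV : V.Finite) :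
    V ⊆ I.1 → sSup V ∈ I.1 := by
  refine Set.Finite.induction_on V hV (fun _ => by simpa using I.bot_mem) ?_
  intro a s _ _ ih h
  rw [sSup_insert]
  exact I.sup_mem (h (Set.mem_insert _ _)) (ih fun v hv => h (Set.mem_insert_of_mem _ hv))

/-- The join of a family of rounded ideals, as a set. -/
def joinSet (S : Set (Set L)) : Set L :=
  {a | ∃ T : Finset L, ↑T ⊆ ⋃₀ S ∧ a ≤ T.sup id}

theorem joinSet_bot_mem (S : Set (Set L)) : ⊥ ∈ joinSet S :=
  ⟨∅, by simp⟩

theorem joinSet_down {S : Set (Set L)} {a b : L} (h : a ≤ b) (hb : b ∈ joinSet S) :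
    a ∈ joinSet S := by
  obtain ⟨T, hT, hle⟩ := hb
  exact ⟨T, hT, h.trans hle⟩

theorem joinSet_sup {S : Set (Set L)} {a b : L} (ha : a ∈ joinSet S) (hb : b ∈ joinSet S) :
    a ⊔ b ∈ joinSet S := by
  classical
  obtain ⟨T₁, hT₁, h₁⟩ := ha
  obtain ⟨T₂, hT₂, h₂⟩ := hb
  refine ⟨T₁ ∪ T₂, ?_, ?_⟩
  · rw [Finset.coe_union]; exact Set.union_subset hT₁ hT₂
  · rw [Finset.sup_union]; exact sup_le_sup h₁ h₂

theorem joinSet_subset {S : Set (Set L)} {I : Set L} (hI : I ∈ S) : I ⊆ joinSet S := by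
  intro a ha
  refine ⟨{a}, ?_, by simp⟩
  intro x hx
  rw [Finset.coe_singleton, Set.mem_singleton_iff] at hx
  subst hx
  exact ⟨I, hI, ha⟩

theorem isRId_joinSet {S : Set (Set L)} (hS : ∀ I ∈ S, IsRId I) : IsRId (joinSet S) := by
  refine ⟨joinSet_bot_mem S, fun a b h hb => joinSet_down h hb,
    fun a b ha hb => joinSet_sup ha hb, ?_⟩
  have key : ∀ T : Finset L, ↑T ⊆ ⋃₀ S → ∃ b ∈ joinSet S, gis WellInside (T.sup id) b := by
    classical
    intro T
    induction T using Finset.induction_on with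
    | empty => exact fun _ => ⟨⊥, joinSet_bot_mem S, by simpa using G_bot (⊥ : L)⟩
    | @insert t T _ ih =>
      intro hsub
      obtain ⟨b, hb, hGb⟩ := ih fun u hu => hsub (by simp [hu])
      obtain ⟨I, hIS, htI⟩ := hsub (Finset.mem_insert_self t T)
      obtain ⟨c, hcI, hGc⟩ := (hS I hIS).2.2.2 t htI
      have hcJ : c ∈ joinSet S := joinSet_subset hIS hcI
      refine ⟨c ⊔ b, joinSet_sup hcJ hb, ?_⟩
      rw [Finset.sup_insert]
      exact G_sup (G_mono le_rfl hGc le_sup_left) (G_mono le_rfl hGb le_sup_right)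
  rintro a ⟨T, hT, ha⟩
  obtain ⟨b, hb, hGb⟩ := key T hT
  exact ⟨b, hb, G_mono ha hGb le_rfl⟩

instance : SupSet (RIdl L) :=
  ⟨fun S => ⟨joinSet (Subtype.val '' S), isRId_joinSet (by rintro I ⟨J, _, rfl⟩; exact J.2)⟩⟩

theorem RIdl.coe_sSup (S : Set (RIdl L)) : (sSup S).1 = joinSet (Subtype.val '' S) := rfl

theorem RIdl.isLUB_sSup (S : Set (RIdl L)) : IsLUB S (sSup S) := by
  constructor
  · intro I hI
    exact RIdl.le_def.mpr (joinSet_subset ⟨I, hI, rfl⟩)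
  · intro J hJ
    rintro a ⟨T, hT, ha⟩
    refine J.down ha (J.finsetSup_mem T fun t ht => ?_)
    obtain ⟨_, ⟨I, hIS, rfl⟩, htI⟩ := hT ht
    exact hJ hIS htI

instance : CompleteLattice (RIdl L) := completeLatticeOfSup _ RIdl.isLUB_sSup

theorem isRId_inter {I J : Set L} (hI : IsRId I) (hJ : IsRId J) : IsRId (I ∩ J) := by
  refine ⟨⟨hI.1, hJ.1⟩, fun a b h hb => ⟨hI.2.1 h hb.1, hJ.2.1 h hb.2⟩,
    fun a b ha hb => ⟨hI.2.2.1 ha.1 hb.1, hJ.2.2.1 ha.2 hb.2⟩, ?_⟩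
  rintro a ⟨haI, haJ⟩
  obtain ⟨b, hbI, hGb⟩ := hI.2.2.2 a haI
  obtain ⟨c, hcJ, hGc⟩ := hJ.2.2.2 a haJ
  exact ⟨b ⊓ c, ⟨hI.2.1 inf_le_left hbI, hJ.2.1 inf_le_right hcJ⟩, G_inf hGb hGc⟩

/-- Make a rounded ideal. -/
def RIdl.mk (I : Set L) (h : IsRId I) : RIdl L := ⟨I, h⟩

theorem RIdl.coe_inf (I J : RIdl L) : (I ⊓ J).1 = I.1 ∩ J.1 := by
  apply Set.Subset.antisymm
  · exact Set.subset_inter (RIdl.le_def.mp inf_le_left) (RIdl.le_def.mp inf_le_right)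
  · have h1 : RIdl.mk (I.1 ∩ J.1) (isRId_inter I.2 J.2) ≤ I :=
      RIdl.le_def.mpr fun x hx => hx.1
    have h2 : RIdl.mk (I.1 ∩ J.1) (isRId_inter I.2 J.2) ≤ J :=
      RIdl.le_def.mpr fun x hx => hx.2
    exact RIdl.le_def.mp (le_inf h1 h2)

theorem isRId_univ : IsRId (Set.univ : Set L) :=
  ⟨trivial, fun _ _ _ _ => trivial, fun _ _ _ _ => trivial,
    fun a _ => ⟨⊤, trivial, G_top a⟩⟩

theorem RIdl.coe_top : ((⊤ : RIdl L)).1 = Set.univ := by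
  apply Set.Subset.antisymm (Set.subset_univ _)
  exact RIdl.le_def.mp (le_top (a := RIdl.mk Set.univ isRId_univ))

theorem isRId_singleton_bot : IsRId ({⊥} : Set L) := by
  refine ⟨rfl, ?_, ?_, ?_⟩
  · rintro a b h rfl; simpa using le_bot_iff.mp h
  · rintro a b rfl rfl; simp
  · rintro a rfl; exact ⟨⊥, rfl, G_bot ⊥⟩

theorem RIdl.coe_bot : ((⊥ : RIdl L)).1 = {⊥} := by
  apply Set.Subset.antisymm
  · exact RIdl.le_def.mp (bot_le (a := RIdl.mk {⊥} isRId_singleton_bot))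
  · rintro a rfl; exact (⊥ : RIdl L).bot_mem

theorem RIdl.eq_top_of_top_mem {I : RIdl L} (h : ⊤ ∈ I.1) : I = ⊤ := by
  refine le_antisymm le_top (RIdl.le_def.mpr fun a _ => I.down le_top h)

instance : Order.Frame (RIdl L) := by
  refine Order.Frame.ofMinimalAxioms ⟨fun I S => RIdl.le_def.mpr fun a ha => ?_⟩
  rw [RIdl.coe_inf] at ha
  obtain ⟨haI, T, hT, hle⟩ := ha
  show a ∈ (⨆ J ∈ S, I ⊓ J).1
  classical
  set R : RIdl L := ⨆ J ∈ S, I ⊓ J with hR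
  refine R.down (a := a) ?_ (R.finsetSup_mem (T.image (a ⊓ ·)) ?_)
  · have heq : a = (T.image (a ⊓ ·)).sup id :=
      calc a = a ⊓ T.sup id := (inf_eq_left.mpr hle).symm
        _ = T.sup fun t => a ⊓ id t := Finset.sup_inf_distrib_left _ _ _
        _ = (T.image (a ⊓ ·)).sup id := by rw [Finset.sup_image]; rfl
    exact heq.le
  · intro u hu
    obtain ⟨t, ht, rfl⟩ := Finset.mem_image.mp hu
    obtain ⟨_, ⟨J, hJS, rfl⟩, htJ⟩ := hT ht
    have h1 : a ⊓ t ∈ (I ⊓ J).1 := by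
      exact (Set.ext_iff.mp (RIdl.coe_inf I J) (a ⊓ t)).mpr
        ⟨I.down inf_le_left haI, RIdl.down inf_le_right htJ⟩
    have h2 : I ⊓ J ≤ R := le_iSup₂ (f := fun J (_ : J ∈ S) => I ⊓ J) J hJS
    exact RIdl.le_def.mp h2 h1

end SRC

namespace SRC

variable {L : Type u} [Order.Frame L]

theorem kHom_map_inf (I J : RIdl L) : sSup (I ⊓ J).1 = sSup I.1 ⊓ sSup J.1 := by
  rw [RIdl.coe_inf]
  apply le_antisymm
  · exact sSup_le fun a ha => le_inf (le_sSup ha.1) (le_sSup ha.2)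
  · rw [sSup_inf_eq]
    refine iSup₂_le fun b hb => ?_
    rw [inf_sSup_eq]
    exact iSup₂_le fun c hc =>
      le_sSup ⟨I.down inf_le_left hb, J.down inf_le_right hc⟩

theorem kHom_map_sSup (S : Set (RIdl L)) :
    sSup (sSup S).1 = sSup ((fun I : RIdl L => sSup I.1) '' S) := by
  apply le_antisymm
  · rw [RIdl.coe_sSup]
    refine sSup_le ?_
    rintro a ⟨T, hT, ha⟩
    refine ha.trans (Finset.sup_le fun t ht => ?_)
    obtain ⟨_, ⟨J, hJ, rfl⟩, htJ⟩ := hT ht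
    exact (le_sSup htJ).trans (le_sSup ⟨J, hJ, rfl⟩)
  · refine sSup_le ?_
    rintro _ ⟨J, hJ, rfl⟩
    exact sSup_le fun a ha =>
      le_sSup (joinSet_subset (S := Subtype.val '' S) ⟨J, hJ, rfl⟩ ha)

/-- The dense surjection from the rounded-ideal frame. -/
def kHom (L : Type u) [Order.Frame L] : FrameHom (RIdl L) L :=
  FrameHom.mk (InfTopHom.mk (InfHom.mk (fun I => sSup I.1) kHom_map_inf)
    (by show sSup ((⊤ : RIdl L)).1 = ⊤; rw [RIdl.coe_top, sSup_univ])) kHom_map_sSup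

theorem kHom_apply (I : RIdl L) : kHom L I = sSup I.1 := rfl

theorem kHom_dense {I : RIdl L} (h : kHom L I = ⊥) : I = ⊥ := by
  refine le_antisymm (RIdl.le_def.mpr fun a ha => ?_) bot_le
  have hab : a = ⊥ := le_bot_iff.mp (h ▸ le_sSup ha)
  rw [RIdl.coe_bot, Set.mem_singleton_iff]
  exact hab

/-- The rounded ideal of elements `gis WellInside`-below `a`. -/
def ida (a : L) : RIdl L :=
  RIdl.mk {b | gis WellInside b a}
    ⟨G_bot a, fun x y h hy => G_mono h hy le_rfl, fun x y hx hy => G_sup hx hy,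
      fun x hx => by
        obtain ⟨z, h1, h2⟩ := gis_interpolative _ _ _ hx
        exact ⟨z, h2, h1⟩⟩

theorem mem_ida {b a : L} : b ∈ (ida a).1 ↔ gis WellInside b a := Iff.rfl

theorem kHom_surjective (hL : ∀ a : L, a = sSup {b | gis WellInside b a}) :
    Function.Surjective (kHom L) :=
  fun a => ⟨ida a, (hL a).symm⟩

theorem RIdl.top_le_of_top_mem {I : RIdl L} (h : ⊤ ∈ I.1) : ⊤ ≤ I :=
  (RIdl.eq_top_of_top_mem h).ge

theorem RIdl.mem_sup_left {X Y : RIdl L} {x : L} (h : x ∈ X.1) : x ∈ (X ⊔ Y).1 :=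
  RIdl.le_def.mp le_sup_left h

theorem RIdl.mem_sup_right {X Y : RIdl L} {y : L} (h : y ∈ Y.1) : y ∈ (X ⊔ Y).1 :=
  RIdl.le_def.mp le_sup_right h

theorem isCompactFrame_RIdl : IsCompactFrame (RIdl L) := by
  intro S hS
  have htop : ⊤ ∈ (sSup S).1 := RIdl.le_def.mp hS (by rw [RIdl.coe_top]; trivial)
  obtain ⟨T, hT, hle⟩ := htop
  have hch : ∀ t : L, t ∈ (T : Set L) → ∃ J : RIdl L, J ∈ S ∧ t ∈ J.1 := by
    intro t ht
    obtain ⟨_, ⟨J, hJ, rfl⟩, htJ⟩ := hT ht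
    exact ⟨J, hJ, htJ⟩
  choose F hF1 hF2 using hch
  refine ⟨{J | ∃ t, ∃ ht : t ∈ (T : Set L), F t ht = J}, ?_, ?_, ?_⟩
  · rintro J ⟨t, ht, rfl⟩; exact hF1 t ht

  · exact (T : Set L).toFinite.dependent_image F
  · refine RIdl.top_le_of_top_mem (I := sSup _) ?_
    refine ⟨T, ?_, hle⟩
    intro t ht
    exact ⟨(F t ht).1, ⟨F t ht, ⟨t, ht, rfl⟩, rfl⟩, hF2 t ht⟩

theorem ida_disjoint (b : L) : ida bᶜ ⊓ ida b = ⊥ := by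
  apply le_antisymm
  · refine RIdl.le_def.mpr fun x hx => ?_
    rw [RIdl.coe_inf] at hx
    have h1 : x ≤ bᶜ ⊓ b := le_inf (G_le hx.1) (G_le hx.2)
    rw [RIdl.coe_bot, Set.mem_singleton_iff]
    exact le_bot_iff.mp (h1.trans (by rw [inf_comm, inf_compl_self]))
  · exact bot_le

theorem isRegularFrame_RIdl : IsRegularFrame (RIdl L) := by
  intro I
  apply le_antisymm
  · refine RIdl.le_def.mpr fun a ha => ?_
    obtain ⟨b, hbI, hGb⟩ := I.rounded ha
    obtain ⟨b₂, hb₂I, hGb₂⟩ := I.rounded hbI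
    obtain ⟨c, hbc, hcb₂⟩ := gis_interpolative _ _ _ hGb₂
    have hcompl : ida bᶜ ≤ (ida b)ᶜ :=
      le_compl_iff_disjoint_right.mpr (disjoint_iff.mpr (ida_disjoint b))
    have hwi : WellInside (ida b) I := by
      show (ida b)ᶜ ⊔ I = ⊤
      have hmem : cᶜ ⊔ b₂ ∈ ((ida b)ᶜ ⊔ I).1 :=
        RIdl.sup_mem (RIdl.mem_sup_left (RIdl.le_def.mp hcompl (G_compl hbc)))
          (RIdl.mem_sup_right hb₂I)
      have htopeq0 : WellInside c b₂ := gis_sub hcb₂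
      have htopeq : cᶜ ⊔ b₂ = ⊤ := htopeq0
      exact RIdl.eq_top_of_top_mem (htopeq ▸ hmem)
    have hle2 : ida b ≤ sSup {J : RIdl L | WellInside J I} := le_sSup hwi
    exact RIdl.le_def.mp hle2 (mem_ida.mpr hGb)
  · exact sSup_le fun J hJ => wi_le hJ

end SRC

namespace SRC

variable {L : Type u} [Order.Frame L] {K : Type v} [Order.Frame K]

theorem fhom_mono (f : FrameHom K L) {a b : K} (h : a ≤ b) : f a ≤ f b := by
  have : f b = f a ⊔ f b := by rw [← map_sup, sup_eq_right.mpr h]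
  rw [this]; exact le_sup_left

theorem sSup_le_sup_inter {c : K} {U T : Set K} (hT : T ⊆ insert c U) :
    sSup T ≤ c ⊔ sSup (T ∩ U) := by
  refine sSup_le fun t ht => ?_
  rcases hT ht with rfl | htU
  · exact le_sup_left
  · exact (le_sSup (Set.mem_inter ht htU)).trans le_sup_right

theorem wi_interp (hcK : IsCompactFrame K) (hrK : IsRegularFrame K) {z x : K}
    (h : WellInside z x) : ∃ w, WellInside z w ∧ WellInside w x := by
  have htop : ⊤ ≤ sSup (insert zᶜ {w | WellInside w x}) := by
    rw [sSup_insert, ← hrK x]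
    exact h.ge
  obtain ⟨T, hT, hTfin, hle⟩ := hcK _ htop
  refine ⟨sSup (T ∩ {w | WellInside w x}), ?_, ?_⟩
  · exact top_le_iff.mp (hle.trans (sSup_le_sup_inter hT))
  · exact wi_sSup_finite (hTfin.inter_of_left _) fun v hv => hv.2

theorem fhom_wi (f : FrameHom K L) {z x : K} (h : WellInside z x) :
    WellInside (f z) (f x) := by
  have h1 : f zᶜ ⊓ f z = ⊥ := by
    rw [← map_inf]
    have hz : zᶜ ⊓ z = ⊥ := by rw [inf_comm, inf_compl_self]
    rw [hz, map_bot]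
  have h2 : f zᶜ ≤ (f z)ᶜ := le_compl_iff_disjoint_right.mpr (disjoint_iff.mpr h1)
  show (f z)ᶜ ⊔ f x = ⊤
  refine top_le_iff.mp ?_
  calc (⊤ : L) = f ⊤ := (map_top f).symm
    _ = f (zᶜ ⊔ x) := by rw [show zᶜ ⊔ x = ⊤ from h]
    _ = f zᶜ ⊔ f x := map_sup f _ _
    _ ≤ (f z)ᶜ ⊔ f x := sup_le_sup h2 le_rfl

theorem fhom_G (hcK : IsCompactFrame K) (hrK : IsRegularFrame K) (f : FrameHom K L)
    {z x : K} (h : WellInside z x) : gis WellInside (f z) (f x) := by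
  refine ⟨fun a b => ∃ p q : K, WellInside p q ∧ a ≤ f p ∧ f q ≤ b, ?_, ?_,
    z, x, h, le_rfl, le_rfl⟩
  · rintro a b ⟨p, q, hpq, hap, hqb⟩
    exact wi_mono hap (fhom_wi f hpq) hqb
  · rintro a b ⟨p, q, hpq, hap, hqb⟩
    obtain ⟨m, hm1, hm2⟩ := wi_interp hcK hrK hpq
    exact ⟨f m, ⟨p, m, hm1, hap, le_rfl⟩, ⟨m, q, hm2, le_rfl, hqb⟩⟩

/-- The underlying set of the lifted homomorphism. -/
def gSet (f : FrameHom K L) (x : K) : Set L := {a | ∃ z, WellInside z x ∧ a ≤ f z}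

theorem isRId_gSet (hcK : IsCompactFrame K) (hrK : IsRegularFrame K) (f : FrameHom K L)
    (x : K) : IsRId (gSet f x) := by
  refine ⟨⟨⊥, wi_bot x, bot_le⟩, ?_, ?_, ?_⟩
  · rintro a b hab ⟨z, hz, hb⟩
    exact ⟨z, hz, hab.trans hb⟩
  · rintro a b ⟨z₁, h₁, ha⟩ ⟨z₂, h₂, hb⟩
    exact ⟨z₁ ⊔ z₂, wi_sup h₁ h₂, (sup_le_sup ha hb).trans (map_sup f _ _).ge⟩
  · rintro a ⟨z, hz, ha⟩
    obtain ⟨w, hw1, hw2⟩ := wi_interp hcK hrK hz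
    exact ⟨f w, ⟨w, hw2, le_rfl⟩, G_mono ha (fhom_G hcK hrK f hw1) le_rfl⟩

/-- The lift of `f` to the rounded-ideal frame. -/
def gIdl (hcK : IsCompactFrame K) (hrK : IsRegularFrame K) (f : FrameHom K L) (x : K) :
    RIdl L := RIdl.mk (gSet f x) (isRId_gSet hcK hrK f x)

theorem mem_gIdl {hcK : IsCompactFrame K} {hrK : IsRegularFrame K} {f : FrameHom K L}
    {x : K} {a : L} : a ∈ (gIdl hcK hrK f x).1 ↔ ∃ z, WellInside z x ∧ a ≤ f z := Iff.rfl

theorem gIdl_mono (hcK : IsCompactFrame K) (hrK : IsRegularFrame K) (f : FrameHom K L)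
    {x y : K} (h : x ≤ y) : gIdl hcK hrK f x ≤ gIdl hcK hrK f y := by
  rintro a ⟨z, hz, ha⟩
  exact ⟨z, wi_mono le_rfl hz h, ha⟩

theorem gIdl_map_top (hcK : IsCompactFrame K) (hrK : IsRegularFrame K) (f : FrameHom K L) :
    gIdl hcK hrK f ⊤ = ⊤ :=
  RIdl.eq_top_of_top_mem ⟨⊤, wi_top ⊤, (map_top f).ge⟩

theorem gIdl_map_inf (hcK : IsCompactFrame K) (hrK : IsRegularFrame K) (f : FrameHom K L)
    (x y : K) : gIdl hcK hrK f (x ⊓ y) = gIdl hcK hrK f x ⊓ gIdl hcK hrK f y := by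
  apply le_antisymm
  · exact le_inf (gIdl_mono hcK hrK f inf_le_left) (gIdl_mono hcK hrK f inf_le_right)
  · refine RIdl.le_def.mpr fun a ha => ?_
    rw [RIdl.coe_inf] at ha
    obtain ⟨⟨z₁, h₁, ha₁⟩, ⟨z₂, h₂, ha₂⟩⟩ := ha
    refine ⟨z₁ ⊓ z₂, ?_, ?_⟩
    · exact wi_inf (wi_mono inf_le_left h₁ le_rfl) (wi_mono inf_le_right h₂ le_rfl)
    · exact (le_inf ha₁ ha₂).trans (map_inf f _ _).ge

theorem gIdl_map_sSup (hcK : IsCompactFrame K) (hrK : IsRegularFrame K) (f : FrameHom K L)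
    (S : Set K) : gIdl hcK hrK f (sSup S) = sSup (gIdl hcK hrK f '' S) := by
  apply le_antisymm
  · refine RIdl.le_def.mpr ?_
    rintro a ⟨z, hz, ha⟩
    set U : Set K := ⋃ x ∈ S, {w | WellInside w x} with hU
    have hsup : sSup S = sSup U := by
      apply le_antisymm
      · refine sSup_le fun x hx => ?_
        rw [hrK x]
        exact sSup_le_sSup fun w hw => Set.mem_iUnion₂.mpr ⟨x, hx, hw⟩
      · refine sSup_le fun w hw => ?_
        obtain ⟨x, hx, hwx⟩ := Set.mem_iUnion₂.mp hw
        exact (wi_le hwx).trans (le_sSup hx)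
    have htop : ⊤ ≤ sSup (insert zᶜ U) := by
      rw [sSup_insert, ← hsup]
      exact hz.ge
    obtain ⟨T, hT, hTfin, hle⟩ := hcK _ htop
    have hzV : z ≤ sSup (T ∩ U) :=
      le_of_top_le_compl_sup (hle.trans (sSup_le_sup_inter hT))
    have hfz : f z ≤ sSup (f '' (T ∩ U)) :=
      (fhom_mono f hzV).trans (map_sSup f _).le
    refine RIdl.down (I := sSup (gIdl hcK hrK f '' S)) (ha.trans hfz) ?_
    refine RIdl.sSup_mem_of_finite _ ((hTfin.inter_of_left _).image f) ?_
    rintro _ ⟨w, hw, rfl⟩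
    obtain ⟨x, hx, hwx⟩ := Set.mem_iUnion₂.mp hw.2
    have h1 : f w ∈ (gIdl hcK hrK f x).1 := ⟨w, hwx, le_rfl⟩
    exact RIdl.le_def.mp (le_sSup (Set.mem_image_of_mem _ hx)) h1
  · refine sSup_le ?_
    rintro _ ⟨x, hx, rfl⟩
    exact gIdl_mono hcK hrK f (le_sSup hx)

/-- The lifted frame homomorphism. -/
def gHom (hcK : IsCompactFrame K) (hrK : IsRegularFrame K) (f : FrameHom K L) :
    FrameHom K (RIdl L) :=
  FrameHom.mk (InfTopHom.mk (InfHom.mk (gIdl hcK hrK f) (gIdl_map_inf hcK hrK f))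
    (gIdl_map_top hcK hrK f)) (gIdl_map_sSup hcK hrK f)

theorem gHom_apply (hcK : IsCompactFrame K) (hrK : IsRegularFrame K) (f : FrameHom K L)
    (x : K) : gHom hcK hrK f x = gIdl hcK hrK f x := rfl

theorem kHom_comp_gHom (hcK : IsCompactFrame K) (hrK : IsRegularFrame K)
    (f : FrameHom K L) : f = (kHom L).comp (gHom hcK hrK f) := by
  refine FrameHom.ext fun x => ?_
  show f x = sSup (gSet f x)
  apply le_antisymm
  · have h1 : f x = f (sSup {z | WellInside z x}) := by rw [← hrK x]
    rw [h1, map_sSup]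
    refine sSup_le ?_
    rintro _ ⟨z, hz, rfl⟩
    exact le_sSup ⟨z, hz, le_rfl⟩
  · refine sSup_le ?_
    rintro a ⟨z, hz, ha⟩
    exact ha.trans (fhom_mono f (wi_le hz))

end SRC

namespace SRC

variable {L : Type u} [Order.Frame L]

theorem exists_pair_of_mem_sup {X Y : RIdl L} {a : L} (ha : a ∈ (X ⊔ Y).1) :
    ∃ p ∈ X.1, ∃ q ∈ Y.1, a ≤ p ⊔ q := by
  have hZ : IsRId {c : L | ∃ p ∈ X.1, ∃ q ∈ Y.1, c ≤ p ⊔ q} := by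
    refine ⟨⟨⊥, X.bot_mem, ⊥, Y.bot_mem, bot_le⟩, ?_, ?_, ?_⟩
    · rintro c d hcd ⟨p, hp, q, hq, hd⟩
      exact ⟨p, hp, q, hq, hcd.trans hd⟩
    · rintro c d ⟨p, hp, q, hq, hc⟩ ⟨p', hp', q', hq', hd⟩
      refine ⟨p ⊔ p', X.sup_mem hp hp', q ⊔ q', Y.sup_mem hq hq', ?_⟩
      calc c ⊔ d ≤ (p ⊔ q) ⊔ (p' ⊔ q') := sup_le_sup hc hd
        _ = (p ⊔ p') ⊔ (q ⊔ q') := sup_sup_sup_comm _ _ _ _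
    · rintro c ⟨p, hp, q, hq, hc⟩
      obtain ⟨p', hp', hGp⟩ := X.rounded hp
      obtain ⟨q', hq', hGq⟩ := Y.rounded hq
      refine ⟨p' ⊔ q', ⟨p', hp', q', hq', le_rfl⟩, ?_⟩
      exact G_mono hc (G_sup (G_mono le_rfl hGp le_sup_left)
        (G_mono le_rfl hGq le_sup_right)) le_rfl
  have hle : X ⊔ Y ≤ RIdl.mk _ hZ := by
    refine sup_le (RIdl.le_def.mpr fun c hc => ?_) (RIdl.le_def.mpr fun c hc => ?_)
    · exact ⟨c, hc, ⊥, Y.bot_mem, by simp⟩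
    · exact ⟨⊥, X.bot_mem, c, hc, by simp⟩
  exact RIdl.le_def.mp hle ha

variable {K : Type v} [Order.Frame K]

theorem gHom_unique (hcK : IsCompactFrame K) (hrK : IsRegularFrame K) (f : FrameHom K L)
    (h : FrameHom K (RIdl L)) (hf : f = (kHom L).comp h) : h = gHom hcK hrK f := by
  have hfz : ∀ z : K, f z = sSup (h z).1 := fun z => DFunLike.congr_fun hf z
  refine FrameHom.ext fun x => le_antisymm ?_ ?_
  · -- h x ≤ gHom x
    refine RIdl.le_def.mpr fun a ha => ?_
    have hx : h x = sSup (h '' {z | WellInside z x}) := by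
      conv_lhs => rw [hrK x]
      exact map_sSup h _
    rw [hx] at ha
    obtain ⟨T, hT, hle⟩ := ha
    have key : ∀ T : Finset L, ↑T ⊆ ⋃₀ (Subtype.val '' (h '' {z | WellInside z x})) →
        ∃ z, WellInside z x ∧ T.sup id ≤ f z := by
      classical
      intro T
      induction T using Finset.induction_on with
      | empty => exact fun _ => ⟨⊥, wi_bot x, by simp⟩
      | @insert t T _ ih =>
        intro hsub
        obtain ⟨z', hz', hle'⟩ := ih fun u hu => hsub (by simp [hu])
        obtain ⟨_, ⟨J, ⟨z, hzx, rfl⟩, rfl⟩, htJ⟩ := hsub (Finset.mem_insert_self t T)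
        have ht : t ≤ f z := (hfz z).symm ▸ le_sSup htJ
        refine ⟨z ⊔ z', wi_sup hzx hz', ?_⟩
        rw [Finset.sup_insert]
        exact (sup_le_sup ht hle').trans (map_sup f _ _).ge
    obtain ⟨z, hzx, hzle⟩ := key T hT
    exact ⟨z, hzx, hle.trans hzle⟩
  · -- gHom x ≤ h x
    refine RIdl.le_def.mpr ?_
    rintro a ⟨z, hz, ha⟩
    have hsup : h zᶜ ⊔ h x = ⊤ := by
      rw [← map_sup, show zᶜ ⊔ x = ⊤ from hz, map_top]
    have htopmem : ⊤ ∈ (h zᶜ ⊔ h x).1 := by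
      rw [hsup, RIdl.coe_top]; trivial
    obtain ⟨p, hp, q, hq, htop⟩ := exists_pair_of_mem_sup htopmem
    have hbot : h z ⊓ h zᶜ = ⊥ := by
      rw [← map_inf, inf_compl_self, map_bot]
    have hap : a ⊓ p = ⊥ := by
      have h1 : a ⊓ p ≤ sSup (h z).1 ⊓ p := inf_le_inf ((ha.trans (hfz z).le)) le_rfl
      have h2 : sSup (h z).1 ⊓ p ≤ ⊥ := by
        rw [sSup_inf_eq]
        refine iSup₂_le fun u hu => ?_
        have hmem : u ⊓ p ∈ (h z ⊓ h zᶜ).1 := by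
          rw [RIdl.coe_inf]
          exact ⟨RIdl.down inf_le_left hu, RIdl.down inf_le_right hp⟩
        rw [hbot, RIdl.coe_bot] at hmem
        exact hmem.le
      exact le_bot_iff.mp (h1.trans h2)
    have haq : a ≤ q := by
      calc a = a ⊓ (p ⊔ q) := by rw [inf_eq_left.mpr (le_top.trans htop)]
        _ = a ⊓ p ⊔ a ⊓ q := inf_sup_left a p q
        _ ≤ q := by rw [hap]; exact sup_le bot_le inf_le_right
    exact RIdl.down haq hq

theorem factor (hcK : IsCompactFrame K) (hrK : IsRegularFrame K) (f : FrameHom K L) :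
    ∃! g : FrameHom K (RIdl L), f = (kHom L).comp g :=
  ⟨gHom hcK hrK f, kHom_comp_gHom hcK hrK f, fun h hf => gHom_unique hcK hrK f h hf⟩

end SRC

/-- Theorem 4.11 of the paper: a strongly regular frame `L` has a compactification
through which every member of a given family of frame homomorphisms with compact
regular domains (as frame homomorphisms into `L`) factors uniquely. -/
theorem stronglyRegular_compactification_extension
    {L : Type u} [Order.Frame L]
    (hL : ∀ a : L, a = sSup {b | gis WellInside b a})
    {ι : Type u} (Lf : ι → Type u) [∀ i, Order.Frame (Lf i)]
    (hc : ∀ i, IsCompactFrame (Lf i)) (hr : ∀ i, IsRegularFrame (Lf i))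
    (f : ∀ i, FrameHom (Lf i) L) :
    ∃ (M : Type u) (_ : Order.Frame M), IsCompactFrame M ∧ IsRegularFrame M ∧
      ∃ k : FrameHom M L,
        (∀ a : M, k a = ⊥ → a = ⊥) ∧ Function.Surjective k ∧
        ∀ i, ∃! g : FrameHom (Lf i) M, f i = k.comp g := by
  exact ⟨SRC.RIdl L, inferInstance, SRC.isCompactFrame_RIdl, SRC.isRegularFrame_RIdl,
    SRC.kHom L, fun a ha => SRC.kHom_dense ha, SRC.kHom_surjective hL,
    fun i => SRC.factor (hc i) (hr i) (f i)⟩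
end

section
/- Let k : M → L be a compactification of a frame L. Then the relation ⊲ₖ (the smallest relation on L containing {(k b, k a) : a, b ∈ M, b ≺ a in M} and closed under conditions (1)–(5) of a strong inclusion, taken with P = L) is a strong inclusion on L compatible with L: it satisfies conditions (1)–(7), and every a ∈ L satisfies a = sSup {x | x ⊲ₖ a}. -/
/-- A sub-pcd-lattice of a frame `L`: a subset containing `⊥` and `⊤`, closed
under binary meets, binary joins and pseudocomplements (computed in `L`). -/
def IsSubPcdLattice {L : Type*} [Order.Frame L] (P : Set L) : Prop :=
  ⊥ ∈ P ∧ ⊤ ∈ P ∧ (∀ x ∈ P, ∀ y ∈ P, x ⊓ y ∈ P) ∧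
    (∀ x ∈ P, ∀ y ∈ P, x ⊔ y ∈ P) ∧ (∀ x ∈ P, xᶜ ∈ P)

/-- A strong inclusion on a sub-pcd-lattice `P` of a frame `L`:
conditions (1)–(7) of Banaschewski. -/
def IsStrongInclusion {L : Type*} [Order.Frame L] (P : Set L) (r : L → L → Prop) : Prop :=
  (r ⊥ ⊥ ∧ r ⊤ ⊤) ∧
  (∀ x a b y, x ∈ P → y ∈ P → x ≤ a → r a b → b ≤ y → r x y) ∧
  (∀ x a b, r x a → r x b → r x (a ⊓ b)) ∧
  (∀ x y a, r x a → r y a → r (x ⊔ y) a) ∧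
  (∀ a b, r a b → r bᶜ aᶜ) ∧
  (∀ a b, r a b → WellInside a b) ∧
  (∀ a b, r a b → ∃ z ∈ P, r a z ∧ r z b)

/-- A relation on `P` is closed under conditions (1)–(5) of a strong inclusion. -/
def ClosedUnder15 {L : Type*} [Order.Frame L] (P : Set L) (r : L → L → Prop) : Prop :=
  (r ⊥ ⊥ ∧ r ⊤ ⊤) ∧
  (∀ x a b y, x ∈ P → y ∈ P → x ≤ a → r a b → b ≤ y → r x y) ∧
  (∀ x a b, r x a → r x b → r x (a ⊓ b)) ∧
  (∀ x y a, r x a → r y a → r (x ⊔ y) a) ∧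
  (∀ a b, r a b → r bᶜ aᶜ)

/-- The smallest relation containing `R` and closed under conditions (1)–(5) of a
strong inclusion on `P`: the intersection of all such relations. -/
def leastClosed15 {L : Type*} [Order.Frame L] (P : Set L) (R : L → L → Prop) :
    L → L → Prop :=
  fun x y => ∀ r : L → L → Prop, (∀ a b, R a b → r a b) → ClosedUnder15 P r → r x y

/-- The strong inclusion associated with a compactification `k : M → L`:
the smallest relation on `L` containing all pairs `(k b, k a)` with `b` well
inside `a` in `M`, closed under conditions (1)–(5) (with `P = L`). -/
def kIncl {M L : Type*} [Order.Frame M] [Order.Frame L] (k : FrameHom M L) :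
    L → L → Prop :=
  leastClosed15 Set.univ
    (fun x y => ∃ a b : M, WellInside b a ∧ x = k b ∧ y = k a)

section Aux

variable {L : Type*} [Order.Frame L]

lemma wi_le {b a : L} (h : WellInside b a) : b ≤ a := by
  have h2 : b ⊓ (bᶜ ⊔ a) = b := by rw [h, inf_top_eq]
  calc b = b ⊓ (bᶜ ⊔ a) := h2.symm
    _ = b ⊓ bᶜ ⊔ b ⊓ a := inf_sup_left _ _ _
    _ ≤ a := by rw [inf_compl_self]; simp

lemma wi_bot (a : L) : WellInside ⊥ a := by simp [WellInside]

lemma wi_mono {x a b y : L} (hx : x ≤ a) (h : WellInside a b) (hy : b ≤ y) :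
    WellInside x y := by
  unfold WellInside at *
  exact top_le_iff.mp (h ▸ sup_le_sup (compl_anti hx) hy)

lemma closed15_wi : ClosedUnder15 (Set.univ : Set L) WellInside := by
  refine ⟨⟨wi_bot ⊥, by simp [WellInside]⟩, ?_, ?_, ?_, ?_⟩
  · intro x a b y _ _ hx h hy; exact wi_mono hx h hy
  · intro x a b ha hb
    unfold WellInside at *
    rw [sup_inf_left, ha, hb, inf_top_eq]
  · intro x y a hx hy
    unfold WellInside at *
    rw [compl_sup, sup_inf_right, hx, hy, inf_top_eq]
  · intro a b h
    unfold WellInside at *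
    have hb : b ⊔ aᶜ = ⊤ := by rw [sup_comm]; exact h
    exact top_le_iff.mp (hb ▸ sup_le_sup_right le_compl_compl _)

lemma wi_sSup_finite {a : L} {T : Set L} (hT : T.Finite)
    (h : ∀ t ∈ T, WellInside t a) : WellInside (sSup T) a := by
  revert h
  refine Set.Finite.induction_on (motive := fun T _ => (∀ t ∈ T, WellInside t a) → WellInside (sSup T) a)
    T hT (fun _ => by simpa using wi_bot a) ?_
  intro x s _ _ ih h
  rw [sSup_insert]
  exact closed15_wi.2.2.2.1 x (sSup s) a (h x (Set.mem_insert _ _))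
    (ih fun t ht => h t (Set.mem_insert_of_mem _ ht))

/-- Interpolation of the well-inside relation in a compact regular frame. -/
lemma wi_interpolate {M : Type*} [Order.Frame M]
    (hMc : IsCompactFrame M) (hMr : IsRegularFrame M)
    {b a : M} (h : WellInside b a) :
    ∃ c, WellInside b c ∧ WellInside c a := by
  set S1 : Set M := {d | WellInside d bᶜ}
  set S2 : Set M := {c | WellInside c a}
  have hcover : ⊤ ≤ sSup (S1 ∪ S2) := by
    have h1 : bᶜ = sSup S1 := hMr bᶜ
    have h2 : a = sSup S2 := hMr a
    have : bᶜ ⊔ a ≤ sSup (S1 ∪ S2) := by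
      rw [h1, h2, sSup_union]
    exact h ▸ this
  obtain ⟨T, hTsub, hTfin, hTtop⟩ := hMc _ hcover
  set c := sSup (T ∩ S2)
  set d := sSup (T ∩ S1)
  have hca : WellInside c a :=
    wi_sSup_finite (hTfin.inter_of_left S2) fun t ht => ht.2
  have hdb : WellInside d bᶜ :=
    wi_sSup_finite (hTfin.inter_of_left S1) fun t ht => ht.2
  have hsplit : sSup T ≤ d ⊔ c := by
    apply sSup_le
    intro t ht
    rcases hTsub ht with h1 | h2
    · exact le_sup_of_le_left (le_sSup ⟨ht, h1⟩)
    · exact le_sup_of_le_right (le_sSup ⟨ht, h2⟩)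
  refine ⟨c, ?_, hca⟩
  have hd : d ≤ bᶜ := wi_le hdb
  have : (⊤ : M) ≤ bᶜ ⊔ c :=
    le_trans hTtop (le_trans hsplit (sup_le_sup_right hd _))
  exact top_le_iff.mp this

end Aux

section KIncl

variable {M L : Type*} [Order.Frame M] [Order.Frame L] (k : FrameHom M L)

lemma kIncl_base {b a : M} (h : WellInside b a) : kIncl k (k b) (k a) :=
  fun _ hR _ => hR _ _ ⟨a, b, h, rfl, rfl⟩

lemma kIncl_closed : ClosedUnder15 (Set.univ : Set L) (kIncl k) := by
  refine ⟨⟨fun r hR hr => hr.1.1, fun r hR hr => hr.1.2⟩, ?_, ?_, ?_, ?_⟩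
  · intro x a b y hx hy hxa hab hby r hR hr
    exact hr.2.1 x a b y hx hy hxa (hab r hR hr) hby
  · intro x a b ha hb r hR hr
    exact hr.2.2.1 x a b (ha r hR hr) (hb r hR hr)
  · intro x y a hx hy r hR hr
    exact hr.2.2.2.1 x y a (hx r hR hr) (hy r hR hr)
  · intro a b h r hR hr
    exact hr.2.2.2.2 a b (h r hR hr)

lemma kIncl_wellInside {x y : L} (h : kIncl k x y) : WellInside x y := by
  apply h WellInside _ closed15_wi
  rintro u v ⟨a, b, hba, rfl, rfl⟩
  have h1 : k bᶜ ≤ (k b)ᶜ := by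
    apply le_compl_iff_disjoint_right.mpr
    rw [disjoint_iff]
    rw [← map_inf]
    have : bᶜ ⊓ b = ⊥ := by rw [inf_comm]; exact inf_compl_self b
    rw [this, map_bot]
  have h2 : (⊤ : L) = k bᶜ ⊔ k a := by
    rw [← map_sup, hba, map_top]
  have h3 : (⊤ : L) ≤ (k b)ᶜ ⊔ k a := by
    calc (⊤ : L) = k bᶜ ⊔ k a := h2
      _ ≤ (k b)ᶜ ⊔ k a := sup_le_sup_right h1 _
  exact top_le_iff.mp h3

end KIncl

/-- The relation associated with a compactification is a compatible strong
inclusion on `L`. -/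
theorem kIncl_isStrongInclusion_compatible
    {M L : Type*} [Order.Frame M] [Order.Frame L]
    (hMc : IsCompactFrame M) (hMr : IsRegularFrame M)
    (k : FrameHom M L) (hdense : ∀ a : M, k a = ⊥ → a = ⊥)
    (hsurj : Function.Surjective k) :
    IsStrongInclusion (Set.univ : Set L) (kIncl k) ∧
      ∀ a : L, a = sSup {x | kIncl k x a} := by
  have hclosed := kIncl_closed k
  constructor
  · refine ⟨hclosed.1, hclosed.2.1, hclosed.2.2.1, hclosed.2.2.2.1, hclosed.2.2.2.2,
      fun a b h => kIncl_wellInside k h, ?_⟩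
    -- interpolation (condition 7)
    intro a b h
    have key : (fun x y => ∃ z, kIncl k x z ∧ kIncl k z y) a b := by
      apply h _ ?_ ?_
      · rintro u v ⟨p, q, hqp, rfl, rfl⟩
        obtain ⟨c, h1, h2⟩ := wi_interpolate hMc hMr hqp
        exact ⟨k c, kIncl_base k h1, kIncl_base k h2⟩
      · refine ⟨⟨⟨⊥, hclosed.1.1, hclosed.1.1⟩, ⟨⊤, hclosed.1.2, hclosed.1.2⟩⟩,
          ?_, ?_, ?_, ?_⟩
        · rintro x p q y _ _ hxp ⟨z, h1, h2⟩ hqy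
          exact ⟨z, hclosed.2.1 x p z z trivial trivial hxp h1 le_rfl,
            hclosed.2.1 z z q y trivial trivial le_rfl h2 hqy⟩
        · rintro x p q ⟨z1, h1, h1'⟩ ⟨z2, h2, h2'⟩
          refine ⟨z1 ⊓ z2, hclosed.2.2.1 x z1 z2 h1 h2, ?_⟩
          exact hclosed.2.2.1 _ p q
            (hclosed.2.1 _ z1 p p trivial trivial inf_le_left h1' le_rfl)
            (hclosed.2.1 _ z2 q q trivial trivial inf_le_right h2' le_rfl)
        · rintro x y p ⟨z1, h1, h1'⟩ ⟨z2, h2, h2'⟩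
          refine ⟨z1 ⊔ z2, ?_, ?_⟩
          · exact hclosed.2.2.2.1 x y _
              (hclosed.2.1 x x z1 _ trivial trivial le_rfl h1 le_sup_left)
              (hclosed.2.1 y y z2 _ trivial trivial le_rfl h2 le_sup_right)
          · exact hclosed.2.2.2.1 z1 z2 p h1' h2'
        · rintro p q ⟨z, h1, h2⟩
          exact ⟨zᶜ, hclosed.2.2.2.2 _ _ h2, hclosed.2.2.2.2 _ _ h1⟩
    obtain ⟨z, h1, h2⟩ := key
    exact ⟨z, trivial, h1, h2⟩
  · intro a
    obtain ⟨b, rfl⟩ := hsurj a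
    apply le_antisymm
    · have hb := hMr b
      conv_lhs => rw [hb]
      rw [map_sSup]
      apply sSup_le
      rintro x ⟨c, hc, rfl⟩
      refine le_sSup ?_
      have : kIncl k (k c) (k b) := kIncl_base k hc
      rw [hb, map_sSup] at this ⊢
      exact this
    · apply sSup_le
      intro x hx
      exact wi_le (kIncl_wellInside k hx)
end
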